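/- Under the single-step uniform label noise model with noise rate ε ∈ (0,1), for every α ∈ (0,1) and every fixed τ ∈ ℝ, the expected clean pinball subgradient decomposes as: E[1{S ≤ τ}] − (1−α) = (1/(1−ε))·( E[1{S̃ ≤ τ}] − (1−α) ) − (ε/(1−ε))·( (1/K)·E[ #{y ∈ {1,…,K} : S_y ≤ τ} ] − (1−α) ), where #{y : S_y ≤ τ} is the (random) cardinality of the prediction set {y ∈ {1,…,K} : S_y ≤ τ}. -/

import Mathlib

open MeasureTheory ProbabilityTheory
open scoped Classical

/-- decomposition of the expected clean pinball subgradient in terms of the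
noisy score and the expected size of the conformal prediction set, under the single-step
uniform label noise model. -/
theorem expected_clean_grad_decomposition
    {Ω 𝒳 : Type*} [MeasurableSpace Ω] [MeasurableSpace 𝒳]
    (μ : Measure Ω) [IsProbabilityMeasure μ]
    (K : ℕ) (hK : 1 ≤ K) (ε : ℝ) (hε : ε ∈ Set.Ioo (0:ℝ) 1)
    (X : Ω → 𝒳) (Y : Ω → Fin K) (U : Ω → ℝ) (Ybar : Ω → Fin K)
    (hX : Measurable X) (hY : Measurable Y) (hU : Measurable U) (hYbar : Measurable Ybar)
    -- U is uniformly distributed on [0,1]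
    (hU_unif : Measure.map U μ = volume.restrict (Set.Icc (0:ℝ) 1))
    -- Ȳ is uniformly distributed on {1,…,K}
    (hYbar_unif : ∀ y : Fin K, μ {ω | Ybar ω = y} = (K : ENNReal)⁻¹)
    -- U, Ȳ and the pair (X, Y) are mutually independent
    (hIndep : iIndep
      ![MeasurableSpace.comap U inferInstance,
        MeasurableSpace.comap Ybar inferInstance,
        MeasurableSpace.comap (fun ω => (X ω, Y ω)) inferInstance] μ)
    -- the score function, measurable with values in [0,1]
    (𝒮 : 𝒳 → Fin K → ℝ) (h𝒮 : ∀ y, Measurable fun x => 𝒮 x y)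
    (h𝒮range : ∀ x y, 𝒮 x y ∈ Set.Icc (0:ℝ) 1)
    -- the noisy label
    (Ytil : Ω → Fin K) (hYtil : ∀ ω, Ytil ω = if ε ≤ U ω then Y ω else Ybar ω)
    (α τ : ℝ) (hα : α ∈ Set.Ioo (0:ℝ) 1) :
    (∫ ω, (if 𝒮 (X ω) (Y ω) ≤ τ then (1:ℝ) else 0) ∂μ) - (1 - α)
      = (1 / (1 - ε)) * ((∫ ω, (if 𝒮 (X ω) (Ytil ω) ≤ τ then (1:ℝ) else 0) ∂μ) - (1 - α))
        - (ε / (1 - ε))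
            * ((1 / (K : ℝ))
                * (∫ ω, (((Finset.univ.filter fun y : Fin K => 𝒮 (X ω) y ≤ τ)).card : ℝ) ∂μ)
              - (1 - α)) := by
  obtain ⟨hε0, hε1⟩ := hε
  have hKne : (K : ℝ) ≠ 0 := Nat.cast_ne_zero.mpr (by omega)
  -- basic sets
  set XY : Ω → 𝒳 × Fin K := fun ω => (X ω, Y ω) with hXY
  have hXYm : Measurable XY := hX.prodMk hY
  have hSjoint : Measurable (fun p : 𝒳 × Fin K => 𝒮 p.1 p.2) :=
    measurable_from_prod_countable_left (fun y => h𝒮 y)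
  set Uset : Set Ω := U ⁻¹' Set.Ici ε with hUsetdef
  set Aclean : Set Ω := XY ⁻¹' {p : 𝒳 × Fin K | 𝒮 p.1 p.2 ≤ τ} with hAcleandef
  set Cy : Fin K → Set Ω := fun y => XY ⁻¹' ({x : 𝒳 | 𝒮 x y ≤ τ} ×ˢ Set.univ) with hCydef
  -- comap measurability
  have hUset_m0 : MeasurableSet[MeasurableSpace.comap U inferInstance] Uset :=
    ⟨Set.Ici ε, measurableSet_Ici, rfl⟩
  have hUsetc_m0 : MeasurableSet[MeasurableSpace.comap U inferInstance] Usetᶜ :=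
    ⟨Set.Iio ε, measurableSet_Iio, by ext ω; simp [hUsetdef, not_le]⟩
  have hYset_m1 : ∀ y : Fin K,
      MeasurableSet[MeasurableSpace.comap Ybar inferInstance] (Ybar ⁻¹' {y}) :=
    fun y => ⟨{y}, measurableSet_singleton y, rfl⟩
  have hAclean_m2 : MeasurableSet[MeasurableSpace.comap XY inferInstance] Aclean :=
    ⟨{p : 𝒳 × Fin K | 𝒮 p.1 p.2 ≤ τ}, hSjoint measurableSet_Iic, rfl⟩
  have hCy_m2 : ∀ y : Fin K,
      MeasurableSet[MeasurableSpace.comap XY inferInstance] (Cy y) :=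
    fun y => ⟨{x : 𝒳 | 𝒮 x y ≤ τ} ×ˢ Set.univ,
      ((h𝒮 y) measurableSet_Iic).prod MeasurableSet.univ, rfl⟩
  -- ambient measurability
  have hUset_m : MeasurableSet Uset := hU measurableSet_Ici
  have hAclean_m : MeasurableSet Aclean := hXYm (hSjoint measurableSet_Iic)
  have hCy_m : ∀ y, MeasurableSet (Cy y) :=
    fun y => hXYm (((h𝒮 y) measurableSet_Iic).prod MeasurableSet.univ)
  have hYset_m : ∀ y : Fin K, MeasurableSet (Ybar ⁻¹' {y}) :=
    fun y => hYbar (measurableSet_singleton y)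
  -- measures of U sets
  have hμU : μ Uset = ENNReal.ofReal (1 - ε) := by
    rw [hUsetdef, ← Measure.map_apply hU measurableSet_Ici, hU_unif,
      Measure.restrict_apply measurableSet_Ici]
    have : Set.Ici ε ∩ Set.Icc (0:ℝ) 1 = Set.Icc ε 1 := by
      ext x; simp only [Set.mem_inter_iff, Set.mem_Ici, Set.mem_Icc]
      constructor
      · rintro ⟨h1, _, h3⟩; exact ⟨h1, h3⟩
      · rintro ⟨h1, h2⟩; exact ⟨h1, le_trans hε0.le h1, h2⟩
    rw [this, Real.volume_Icc]
  have hμUc : μ Usetᶜ = ENNReal.ofReal ε := by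
    have : Usetᶜ = U ⁻¹' Set.Iio ε := by ext ω; simp [hUsetdef, not_le]
    rw [this, ← Measure.map_apply hU measurableSet_Iio, hU_unif,
      Measure.restrict_apply measurableSet_Iio]
    have : Set.Iio ε ∩ Set.Icc (0:ℝ) 1 = Set.Ico 0 ε := by
      ext x; simp only [Set.mem_inter_iff, Set.mem_Iio, Set.mem_Icc, Set.mem_Ico]
      constructor
      · rintro ⟨h1, h2, _⟩; exact ⟨h2, h1⟩
      · rintro ⟨h1, h2⟩; exact ⟨h2, h1, le_trans h2.le hε1.le⟩
    rw [this, Real.volume_Ico, sub_zero]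
  -- independence: pairwise (U, XY)
  have hInd02 : μ (Uset ∩ Aclean) = μ Uset * μ Aclean := by
    have h := hIndep.indep (i := 0) (j := 2) (by decide)
    exact (Indep_iff _ _ _).1 h Uset Aclean hUset_m0 hAclean_m2
  -- triple independence
  have hYb : ∀ y : Fin K, μ (Ybar ⁻¹' {y}) = (K : ENNReal)⁻¹ := fun y => hYbar_unif y
  have hInd3 : ∀ y : Fin K, μ (Usetᶜ ∩ (Ybar ⁻¹' {y} ∩ Cy y))
      = μ Usetᶜ * (μ (Ybar ⁻¹' {y}) * μ (Cy y)) := by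
    intro y
    have h := hIndep.meas_iInter (s := ![Usetᶜ, Ybar ⁻¹' {y}, Cy y])
      (fun i => by
        fin_cases i
        · exact hUsetc_m0
        · exact hYset_m1 y
        · exact hCy_m2 y)
    have hiInter : (⋂ i, ![Usetᶜ, Ybar ⁻¹' {y}, Cy y] i)
        = Usetᶜ ∩ (Ybar ⁻¹' {y} ∩ Cy y) := by
      ext ω
      simp only [Set.mem_iInter, Set.mem_inter_iff, Fin.forall_fin_succ]
      simp [Matrix.cons_val_zero, Matrix.cons_val_one, and_assoc]
    rw [hiInter, Fin.prod_univ_three] at h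
    rw [h]
    simp [Matrix.cons_val_zero, Matrix.cons_val_one, Matrix.head_cons, mul_assoc]
  -- noisy set decomposition
  set Anoisy : Set Ω := (Uset ∩ Aclean) ∪ (Usetᶜ ∩ ⋃ y, (Ybar ⁻¹' {y} ∩ Cy y)) with hAnoisydef
  have hAnoisy_eq : ∀ ω, (if 𝒮 (X ω) (Ytil ω) ≤ τ then (1:ℝ) else 0)
      = Anoisy.indicator (fun _ => (1:ℝ)) ω := by
    intro ω
    rw [Set.indicator_apply]
    congr 1
    simp only [hAnoisydef, Set.mem_union, Set.mem_inter_iff, Set.mem_iUnion,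
      Set.mem_preimage, Set.mem_singleton_iff, Set.mem_compl_iff, hUsetdef,
      hAcleandef, hCydef, Set.mem_Ici, Set.mem_setOf_eq, Set.mem_prod, Set.mem_univ,
      and_true, eq_iff_iff]
    rw [hYtil ω]
    by_cases h : ε ≤ U ω
    · simp [h]
      exact Iff.rfl
    · rw [if_neg h]
      constructor
      · intro hs; exact Or.inr ⟨h, ⟨Ybar ω, rfl, hs⟩⟩
      · rintro (⟨h1, _⟩ | ⟨_, y, hy, hs⟩)
        · exact absurd h1 h
        · rw [hy]; exact hs
  -- measure of Anoisy
  have hdisj2 : ∀ y z : Fin K, y ≠ z →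
      Disjoint (Ybar ⁻¹' {y} ∩ Cy y) (Ybar ⁻¹' {z} ∩ Cy z) := by
    intro y z hyz
    refine Set.disjoint_left.mpr ?_
    rintro ω ⟨h1, _⟩ ⟨h2, _⟩
    exact hyz (h1.symm.trans h2)
  have hUnion_m : MeasurableSet (⋃ y, (Ybar ⁻¹' {y} ∩ Cy y)) :=
    MeasurableSet.iUnion fun y => (hYset_m y).inter (hCy_m y)
  have hAnoisy_m : MeasurableSet Anoisy :=
    (hUset_m.inter hAclean_m).union (hUset_m.compl.inter hUnion_m)
  have hμAnoisy : μ Anoisy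
      = ENNReal.ofReal (1 - ε) * μ Aclean
        + ENNReal.ofReal ε * ((K : ENNReal)⁻¹ * ∑ y : Fin K, μ (Cy y)) := by
    have hdisjUn : Disjoint (Uset ∩ Aclean) (Usetᶜ ∩ ⋃ y, (Ybar ⁻¹' {y} ∩ Cy y)) :=
      Disjoint.mono Set.inter_subset_left Set.inter_subset_left disjoint_compl_right
    rw [hAnoisydef, measure_union hdisjUn (hUset_m.compl.inter hUnion_m), hInd02, hμU]
    congr 1
    rw [Set.inter_iUnion, measure_iUnion
        (fun y z hyz => Disjoint.mono Set.inter_subset_right Set.inter_subset_right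
          (hdisj2 y z hyz))
        (fun y => hUset_m.compl.inter ((hYset_m y).inter (hCy_m y)))]
    have : ∀ y : Fin K, μ (Usetᶜ ∩ (Ybar ⁻¹' {y} ∩ Cy y))
        = ENNReal.ofReal ε * ((K : ENNReal)⁻¹ * μ (Cy y)) := by
      intro y
      rw [hInd3 y, hμUc, hYb y]
    rw [tsum_fintype]
    simp_rw [this]
    rw [← Finset.mul_sum, ← Finset.mul_sum]
  -- integrals as measures
  have hint_clean : (∫ ω, (if 𝒮 (X ω) (Y ω) ≤ τ then (1:ℝ) else 0) ∂μ)
      = (μ Aclean).toReal := by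
    rw [← Measure.real_def, ← integral_indicator_one hAclean_m]
    refine integral_congr_ae (Filter.Eventually.of_forall fun ω => ?_)
    rw [Set.indicator_apply]
    simp [hAcleandef, hXY]
  have hint_noisy : (∫ ω, (if 𝒮 (X ω) (Ytil ω) ≤ τ then (1:ℝ) else 0) ∂μ)
      = (μ Anoisy).toReal := by
    rw [← Measure.real_def, ← integral_indicator_one hAnoisy_m]
    exact integral_congr_ae (Filter.Eventually.of_forall fun ω => hAnoisy_eq ω)
  have hint_Cy : ∀ y : Fin K, (∫ ω, (if 𝒮 (X ω) y ≤ τ then (1:ℝ) else 0) ∂μ)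
      = (μ (Cy y)).toReal := by
    intro y
    rw [← Measure.real_def, ← integral_indicator_one (hCy_m y)]
    refine integral_congr_ae (Filter.Eventually.of_forall fun ω => ?_)
    rw [Set.indicator_apply]
    simp [hCydef, hXY]
  have hint_card : (∫ ω, (((Finset.univ.filter fun y : Fin K => 𝒮 (X ω) y ≤ τ)).card : ℝ) ∂μ)
      = ∑ y : Fin K, (μ (Cy y)).toReal := by
    have hcard : ∀ ω, (((Finset.univ.filter fun y : Fin K => 𝒮 (X ω) y ≤ τ)).card : ℝ)
        = ∑ y : Fin K, (if 𝒮 (X ω) y ≤ τ then (1:ℝ) else 0) := by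
      intro ω
      rw [Finset.card_filter]
      push_cast
      rfl
    simp_rw [hcard]
    rw [integral_finset_sum]
    · exact Finset.sum_congr rfl fun y _ => hint_Cy y
    · intro y _
      have : (fun ω => if 𝒮 (X ω) y ≤ τ then (1:ℝ) else 0)
          = (Cy y).indicator (fun _ => (1:ℝ)) := by
        ext ω; rw [Set.indicator_apply]; simp [hCydef, hXY]
      rw [this]
      exact (integrable_const (1:ℝ)).indicator (hCy_m y)
  -- real number versions
  have hfin : ∀ s : Set Ω, μ s ≠ ⊤ := fun s => measure_ne_top μ s
  have hnoisy_real : (μ Anoisy).toReal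
      = (1 - ε) * (μ Aclean).toReal + ε * ((K:ℝ)⁻¹ * ∑ y : Fin K, (μ (Cy y)).toReal) := by
    rw [hμAnoisy, ENNReal.toReal_add, ENNReal.toReal_mul, ENNReal.toReal_mul,
      ENNReal.toReal_mul, ENNReal.toReal_ofReal (by linarith), ENNReal.toReal_ofReal hε0.le,
      ENNReal.toReal_inv, ENNReal.toReal_natCast, ENNReal.toReal_sum (fun y _ => hfin _)]
    · exact ENNReal.mul_ne_top ENNReal.ofReal_ne_top (hfin _)
    · exact ENNReal.mul_ne_top ENNReal.ofReal_ne_top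
        (ENNReal.mul_ne_top (ENNReal.inv_ne_top.mpr (by exact_mod_cast hKne))
          (ENNReal.sum_lt_top.mpr fun y _ => (measure_lt_top μ _)).ne)
  rw [hint_clean, hint_noisy, hint_card, hnoisy_real]
  have h1ε : (1 : ℝ) - ε ≠ 0 := by linarith
  field_simp
  ring
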